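/- Let f : ℝ^d → ℝ be written as f(x) = E_{z∼D_m}[f(x,z)] for each m, with f(·,z) almost surely L-smooth and μ-strongly convex (μ ≥ 0), and let x_* be a minimizer of f. Let x^1, ..., x^M ∈ ℝ^d, x̂ = (1/M) Σ_m x^m, V = (1/M) Σ_m ‖x^m - x̂‖², and let g = (1/M) Σ_m ∇f(x^m, z_m) with z_1, ..., z_M independent, z_m ∼ D_m. If 0 < γ ≤ 1/(4L(1 + 2/M)), then E‖x̂ - γg - x_*‖² ≤ (1 - γμ)‖x̂ - x_*‖² + 2γL·V + 2γ²σ_opt²/M - (γ/2)(f(x̂) - f(x_*)), where σ_opt² = (1/M) Σ_m E_{z_m∼D_m}‖∇f(x_*, z_m)‖². -/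

import Mathlib

open MeasureTheory ProbabilityTheory Finset
open scoped InnerProductSpace

/-- `f : ℝ^d → ℝ` is `L`-smooth and `μ`-strongly convex (`μ = 0` meaning merely convex),
witnessed by the gradient map `df`:
`(μ/2)‖x - y‖² ≤ f x - f y - ⟪df y, x - y⟫ ≤ (L/2)‖x - y‖²` for all `x, y`. -/
def SmoothSC {d : ℕ} (L μ : ℝ) (f : EuclideanSpace ℝ (Fin d) → ℝ)
    (df : EuclideanSpace ℝ (Fin d) → EuclideanSpace ℝ (Fin d)) : Prop :=
  ∀ x y : EuclideanSpace ℝ (Fin d),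
    μ / 2 * ‖x - y‖ ^ 2 ≤ f x - f y - ⟪df y, x - y⟫_ℝ ∧
    f x - f y - ⟪df y, x - y⟫_ℝ ≤ L / 2 * ‖x - y‖ ^ 2

/-- The Bregman divergence `D_f(x, y) = f x - f y - ⟪∇f y, x - y⟫` of `f`,
with gradient map `df`. -/
noncomputable def Breg {d : ℕ} (f : EuclideanSpace ℝ (Fin d) → ℝ)
    (df : EuclideanSpace ℝ (Fin d) → EuclideanSpace ℝ (Fin d))
    (x y : EuclideanSpace ℝ (Fin d)) : ℝ :=
  f x - f y - ⟪df y, x - y⟫_ℝ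

lemma avg_norm_sq_le {d n : ℕ} (v : Fin n → EuclideanSpace ℝ (Fin d)) :
    ‖(n : ℝ)⁻¹ • ∑ m, v m‖ ^ 2 ≤ (n : ℝ)⁻¹ * ∑ m, ‖v m‖ ^ 2 := by
  rcases Nat.eq_zero_or_pos n with hn | hn
  · subst hn; simp
  have hn' : (0:ℝ) < n := by exact_mod_cast hn
  have h1 : ‖∑ m, v m‖ ≤ ∑ m, ‖v m‖ := norm_sum_le _ _
  have h2 : (∑ m, ‖v m‖) ^ 2 ≤ (n : ℝ) * ∑ m, ‖v m‖ ^ 2 := by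
    simpa using sq_sum_le_card_mul_sum_sq (s := (univ : Finset (Fin n))) (f := fun m => ‖v m‖)
  have h3 : ‖∑ m, v m‖ ^ 2 ≤ (n : ℝ) * ∑ m, ‖v m‖ ^ 2 := by
    nlinarith [norm_nonneg (∑ m, v m)]
  rw [norm_smul]
  have : |((n:ℝ)⁻¹)| = (n:ℝ)⁻¹ := abs_of_pos (by positivity)
  rw [Real.norm_eq_abs, this, mul_pow]
  calc (n:ℝ)⁻¹ ^ 2 * ‖∑ m, v m‖ ^ 2 ≤ (n:ℝ)⁻¹ ^ 2 * ((n : ℝ) * ∑ m, ‖v m‖ ^ 2) := by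
        apply mul_le_mul_of_nonneg_left h3 (by positivity)
    _ = (n : ℝ)⁻¹ * ∑ m, ‖v m‖ ^ 2 := by field_simp

lemma cocoercive {d : ℕ} {L μ : ℝ} (hL : 0 < L) (hμ : 0 ≤ μ)
    {h : EuclideanSpace ℝ (Fin d) → ℝ} {dh : EuclideanSpace ℝ (Fin d) → EuclideanSpace ℝ (Fin d)}
    (hs : SmoothSC L μ h dh) (x y : EuclideanSpace ℝ (Fin d)) :
    ‖dh x - dh y‖ ^ 2 ≤ 2 * L * (h x - h y - ⟪dh y, x - y⟫_ℝ) := by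
  set u := dh x - dh y with hu
  set w := x - L⁻¹ • u with hw
  have h1 := (hs w x).2
  have h2 := (hs w y).1
  have hwx : w - x = -(L⁻¹ • u) := by rw [hw]; abel
  have hnorm : ‖w - x‖ ^ 2 = L⁻¹ ^ 2 * ‖u‖ ^ 2 := by
    rw [hwx, norm_neg, norm_smul, Real.norm_eq_abs, abs_of_pos (by positivity), mul_pow]
  have hin1 : ⟪dh x, w - x⟫_ℝ = -(L⁻¹ * ⟪dh x, u⟫_ℝ) := by
    rw [hwx, inner_neg_right, real_inner_smul_right]
  have hwy : w - y = (x - y) - L⁻¹ • u := by rw [hw]; abel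
  have hin2 : ⟪dh y, w - y⟫_ℝ = ⟪dh y, x - y⟫_ℝ - L⁻¹ * ⟪dh y, u⟫_ℝ := by
    rw [hwy, inner_sub_right, real_inner_smul_right]
  have hmu : 0 ≤ μ / 2 * ‖w - y‖ ^ 2 := by positivity
  have hinu : ⟪dh x, u⟫_ℝ - ⟪dh y, u⟫_ℝ = ‖u‖ ^ 2 := by
    rw [← inner_sub_left, ← hu, real_inner_self_eq_norm_sq]
  rw [hnorm] at h1
  rw [hin1] at h1
  rw [hin2] at h2
  have hL' : 0 < L⁻¹ := by positivity
  have hLL : L * L⁻¹ = 1 := mul_inv_cancel₀ hL.ne'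
  have key : L⁻¹ / 2 * ‖u‖ ^ 2 ≤ h x - h y - ⟪dh y, x - y⟫_ℝ := by nlinarith [hLL]
  have := mul_le_mul_of_nonneg_left key (le_of_lt (by positivity : (0:ℝ) < 2 * L))
  nlinarith [hLL]

lemma comp_map_integrable {Z Ω E : Type*} [MeasurableSpace Z] [MeasurableSpace Ω]
    [NormedAddCommGroup E] {P : Measure Ω} {D : Measure Z} {z : Ω → Z}
    (hz : Measurable z) (hlaw : P.map z = D) {φ : Z → E}
    (hφ : AEStronglyMeasurable φ D) (hint : Integrable φ D) :
    Integrable (fun ω => φ (z ω)) P := by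
  subst hlaw
  exact (integrable_map_measure hφ hz.aemeasurable).mp hint

lemma comp_map_integral {Z Ω E : Type*} [MeasurableSpace Z] [MeasurableSpace Ω]
    [NormedAddCommGroup E] [NormedSpace ℝ E] {P : Measure Ω} {D : Measure Z} {z : Ω → Z}
    (hz : Measurable z) (hlaw : P.map z = D) {φ : Z → E}
    (hφ : AEStronglyMeasurable φ D) :
    ∫ ω, φ (z ω) ∂P = ∫ w, φ w ∂D := by
  subst hlaw
  exact (integral_map hz.aemeasurable hφ).symm

lemma coord_sq_le {d : ℕ} (v : EuclideanSpace ℝ (Fin d)) (i : Fin d) :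
    (v i) ^ 2 ≤ ‖v‖ ^ 2 := by
  have h : ‖v‖ ^ 2 = ∑ j, (v j) ^ 2 := by
    rw [← real_inner_self_eq_norm_sq, PiLp.inner_apply]
    simp [RCLike.inner_apply, sq]
  rw [h]
  exact Finset.single_le_sum (fun j _ => sq_nonneg (v j)) (mem_univ i)

set_option maxHeartbeats 4000000 in
/-- one-step optimality gap contraction. -/
theorem optimality_gap_contraction {d M : ℕ} (hM : 0 < M) (L : ℝ) (hL : 0 < L) (μ : ℝ) (hμ : 0 ≤ μ)
    {Z : Type*} [MeasurableSpace Z] {Ω : Type*} [MeasurableSpace Ω]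
    (P : Measure Ω) [IsProbabilityMeasure P]
    (D : Fin M → Measure Z) (hD : ∀ m, IsProbabilityMeasure (D m))
    (F : EuclideanSpace ℝ (Fin d) → Z → ℝ) (dF : EuclideanSpace ℝ (Fin d) → Z → EuclideanSpace ℝ (Fin d))
    (f : EuclideanSpace ℝ (Fin d) → ℝ) (df : EuclideanSpace ℝ (Fin d) → EuclideanSpace ℝ (Fin d))
    (hsmooth : ∀ m, ∀ᵐ z ∂(D m), SmoothSC L μ (fun x => F x z) (fun x => dF x z))
    (hf : ∀ m x, f x = ∫ z, F x z ∂(D m))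
    (hdf : ∀ m x, df x = ∫ z, dF x z ∂(D m))
    (hFjm : Measurable (fun p : EuclideanSpace ℝ (Fin d) × Z => F p.1 p.2))
    (hdFjm : Measurable (fun p : EuclideanSpace ℝ (Fin d) × Z => dF p.1 p.2))
    (hFint : ∀ m x, Integrable (fun z => F x z) (D m))
    (hdFsq : ∀ m x, Integrable (fun z => ‖dF x z‖ ^ 2) (D m))
    (xstar : EuclideanSpace ℝ (Fin d)) (hmin : ∀ y, f xstar ≤ f y)
    (z : Fin M → Ω → Z) (hz : ∀ m, Measurable (z m))
    (hindep : iIndepFun (m := fun _ : Fin M => ‹MeasurableSpace Z›) z P)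
    (hlaw : ∀ m, P.map (z m) = D m)
    (sopt2 : ℝ)
    (hsopt2 : sopt2 = (M : ℝ)⁻¹ * ∑ m, ∫ w, ‖dF xstar w‖ ^ 2 ∂(D m))
    (x : Fin M → EuclideanSpace ℝ (Fin d))
    (xhat : EuclideanSpace ℝ (Fin d)) (hxhat : xhat = (M : ℝ)⁻¹ • ∑ m, x m)
    (Vdev : ℝ) (hV : Vdev = (M : ℝ)⁻¹ * ∑ m, ‖x m - xhat‖ ^ 2)
    (γ : ℝ) (hγ0 : 0 < γ) (hγ : γ ≤ 1 / (4 * L * (1 + 2 / M))) :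
    (∫ ω, ‖xhat - γ • ((M : ℝ)⁻¹ • ∑ m, dF (x m) (z m ω)) - xstar‖ ^ 2 ∂P) ≤
      (1 - γ * μ) * ‖xhat - xstar‖ ^ 2 + 2 * γ * L * Vdev +
        2 * γ ^ 2 * sopt2 / M - γ / 2 * (f xhat - f xstar) := by
  haveI := hD
  have hM' : (0:ℝ) < M := by exact_mod_cast hM
  set a := xhat - xstar with ha
  -- measurability of sections
  have hmF : ∀ y : EuclideanSpace ℝ (Fin d), Measurable (fun w => F y w) :=
    fun y => hFjm.comp measurable_prodMk_left
  have hmdF : ∀ y : EuclideanSpace ℝ (Fin d), Measurable (fun w => dF y w) :=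
    fun y => hdFjm.comp measurable_prodMk_left
  -- integrability over D m
  have IntdF : ∀ (m : Fin M) y, Integrable (fun w => dF y w) (D m) := by
    intro m y
    refine Integrable.mono' ((integrable_const 1).add (hdFsq m y)) (hmdF y).aestronglyMeasurable ?_
    filter_upwards with w
    simp only [Pi.add_apply]
    nlinarith [norm_nonneg (dF y w), sq_nonneg (‖dF y w‖ - 1)]
  have IntInner : ∀ (m : Fin M) (y c : EuclideanSpace ℝ (Fin d)),
      Integrable (fun w => ⟪c, dF y w⟫_ℝ) (D m) := by
    intro m y c
    refine Integrable.mono' (((integrable_const 1).add (hdFsq m y)).const_mul ‖c‖)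
      (Measurable.inner measurable_const (hmdF y)).aestronglyMeasurable ?_
    filter_upwards with w
    have h1 := abs_real_inner_le_norm c (dF y w)
    have h2 : ‖dF y w‖ ≤ 1 + ‖dF y w‖ ^ 2 := by nlinarith [sq_nonneg (‖dF y w‖ - 1)]
    simp only [Real.norm_eq_abs, Pi.add_apply]
    calc |⟪c, dF y w⟫_ℝ| ≤ ‖c‖ * ‖dF y w‖ := h1
      _ ≤ ‖c‖ * (1 + ‖dF y w‖ ^ 2) := by
          exact mul_le_mul_of_nonneg_left h2 (norm_nonneg c)
  -- integral of Bregman integrand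
  have hBreg : ∀ (m : Fin M) (p q : EuclideanSpace ℝ (Fin d)),
      ∫ w, (F p w - F q w - ⟪dF q w, p - q⟫_ℝ) ∂(D m)
        = f p - f q - ⟪df q, p - q⟫_ℝ := by
    intro m p q
    have hIc : Integrable (fun w => ⟪dF q w, p - q⟫_ℝ) (D m) := by
      have := IntInner m q (p - q)
      refine this.congr ?_
      filter_upwards with w using real_inner_comm _ _
    have hsub : Integrable (fun w => F p w - F q w) (D m) := (hFint m p).sub (hFint m q)
    rw [integral_sub hsub hIc, integral_sub (hFint m p) (hFint m q)]
    have hic : ∫ w, ⟪dF q w, p - q⟫_ℝ ∂(D m) = ⟪df q, p - q⟫_ℝ := by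
      have h1 : ∫ w, ⟪dF q w, p - q⟫_ℝ ∂(D m) = ∫ w, ⟪p - q, dF q w⟫_ℝ ∂(D m) := by
        congr 1; funext w; exact real_inner_comm _ _
      rw [h1, integral_inner (IntdF m q) (p - q), ← hdf m q]
      exact real_inner_comm _ _
    rw [hic, ← hf m p, ← hf m q]
  -- f is smooth and strongly convex
  have fS : SmoothSC L μ f df := by
    intro p q
    set m0 : Fin M := ⟨0, hM⟩
    have hIc : Integrable (fun w => ⟪dF q w, p - q⟫_ℝ) (D m0) := by
      refine (IntInner m0 q (p - q)).congr ?_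
      filter_upwards with w using real_inner_comm _ _
    have hint : Integrable (fun w => F p w - F q w - ⟪dF q w, p - q⟫_ℝ) (D m0) :=
      ((hFint m0 p).sub (hFint m0 q)).sub hIc
    constructor
    · have hle : ∀ᵐ w ∂(D m0), (fun _ => μ / 2 * ‖p - q‖ ^ 2) w ≤
          (fun w => F p w - F q w - ⟪dF q w, p - q⟫_ℝ) w := by
        filter_upwards [hsmooth m0] with w hw using (hw p q).1
      have := integral_mono_ae (integrable_const _) hint hle
      rwa [hBreg m0 p q, integral_const, probReal_univ, one_smul] at this
    · have hle : ∀ᵐ w ∂(D m0), (fun w => F p w - F q w - ⟪dF q w, p - q⟫_ℝ) w ≤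
          (fun _ => L / 2 * ‖p - q‖ ^ 2) w := by
        filter_upwards [hsmooth m0] with w hw using (hw p q).2
      have := integral_mono_ae hint (integrable_const _) hle
      rwa [hBreg m0 p q, integral_const, probReal_univ, one_smul] at this
  -- gradient vanishes at the minimizer
  have hdf0 : df xstar = 0 := by
    set gs := df xstar with hgs
    have h1 := (fS (xstar - L⁻¹ • gs) xstar).2
    have h2 := hmin (xstar - L⁻¹ • gs)
    have hv : xstar - L⁻¹ • gs - xstar = -(L⁻¹ • gs) := by abel
    rw [hv, inner_neg_right, real_inner_smul_right, real_inner_self_eq_norm_sq,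
      norm_neg, norm_smul, Real.norm_eq_abs, abs_of_pos (by positivity : (0:ℝ) < L⁻¹),
      mul_pow] at h1
    have hLL : L * L⁻¹ = 1 := mul_inv_cancel₀ hL.ne'
    simp only [← hgs] at h1
    have h3 : L / 2 * (L⁻¹ ^ 2 * ‖gs‖ ^ 2) = L⁻¹ / 2 * ‖gs‖ ^ 2 := by
      field_simp
    have h4 : L⁻¹ * ‖gs‖ ^ 2 ≤ 0 := by linarith
    have h5 : ‖gs‖ ^ 2 = L * (L⁻¹ * ‖gs‖ ^ 2) := by rw [← mul_assoc, hLL, one_mul]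
    have hsq : ‖gs‖ ^ 2 ≤ 0 := by
      rw [h5]; exact mul_nonpos_of_nonneg_of_nonpos hL.le h4
    have : ‖gs‖ = 0 := by nlinarith [norm_nonneg gs]
    rw [hgs] at this ⊢
    exact norm_eq_zero.mp this
  -- deterministic facts
  have hVnn : 0 ≤ Vdev := by
    rw [hV]; positivity
  have hGnn : 0 ≤ f xhat - f xstar := sub_nonneg.mpr (hmin xhat)
  have hdev0 : ∑ m, (x m - xhat) = 0 := by
    rw [Finset.sum_sub_distrib, Finset.sum_const, card_univ, Fintype.card_fin,
      ← Nat.cast_smul_eq_nsmul ℝ, hxhat, smul_smul, mul_inv_cancel₀ hM'.ne', one_smul, sub_self]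
  have gap_avg : (M:ℝ)⁻¹ * ∑ m, (f (x m) - f xstar) ≤
      (f xhat - f xstar) + L / 2 * Vdev := by
    have h2 : ∑ m, ⟪df xhat, x m - xhat⟫_ℝ = 0 := by
      rw [← inner_sum, hdev0, inner_zero_right]
    have hs := Finset.sum_le_sum (s := univ) (fun (m : Fin M) _ => (fS (x m) xhat).2)
    rw [Finset.sum_sub_distrib, h2, sub_zero, ← Finset.mul_sum] at hs
    have h4 : ∑ m, (f (x m) - f xstar) = ∑ m, (f (x m) - f xhat) + M * (f xhat - f xstar) := by
      simp only [Finset.sum_sub_distrib, Finset.sum_const, card_univ, Fintype.card_fin,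
        nsmul_eq_mul]
      ring
    rw [hV, h4]
    have h6 : (M:ℝ)⁻¹ * (L / 2 * ∑ m, ‖x m - xhat‖ ^ 2 + (M:ℝ) * (f xhat - f xstar)) =
        (f xhat - f xstar) + L / 2 * ((M:ℝ)⁻¹ * ∑ m, ‖x m - xhat‖ ^ 2) := by
      field_simp
      ring
    have h5 : (M:ℝ)⁻¹ * (∑ m, (f (x m) - f xhat) + (M:ℝ) * (f xhat - f xstar)) ≤
        (M:ℝ)⁻¹ * (L / 2 * ∑ m, ‖x m - xhat‖ ^ 2 + (M:ℝ) * (f xhat - f xstar)) := by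
      apply mul_le_mul_of_nonneg_left _ (by positivity)
      linarith
    linarith [h5, h6.le, h6.ge]
  have hinner_lb : f xhat - f xstar + μ / 2 * ‖a‖ ^ 2 - L / 2 * Vdev ≤
      (M:ℝ)⁻¹ * ∑ m, ⟪a, df (x m)⟫_ℝ := by
    have pm : ∀ m : Fin M, f xhat - f xstar + μ / 2 * ‖x m - xstar‖ ^ 2
        - L / 2 * ‖x m - xhat‖ ^ 2 ≤ ⟪a, df (x m)⟫_ℝ := by
      intro m
      have h1 := (fS xstar (x m)).1
      have h2 := (fS xhat (x m)).2
      have e1 : ⟪df (x m), xstar - x m⟫_ℝ = -⟪df (x m), x m - xstar⟫_ℝ := by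
        rw [← inner_neg_right]
        congr 1
        abel
      have e2 : ⟪a, df (x m)⟫_ℝ = ⟪df (x m), xhat - x m⟫_ℝ + ⟪df (x m), x m - xstar⟫_ℝ := by
        rw [real_inner_comm, ← inner_add_right]
        congr 1
        rw [ha]
        abel
      rw [norm_sub_rev xstar (x m)] at h1
      rw [norm_sub_rev xhat (x m)] at h2
      rw [e1] at h1
      rw [e2]
      linarith
    have hsum := Finset.sum_le_sum (s := univ) (fun (m : Fin M) _ => pm m)
    have hJ : ‖a‖ ^ 2 ≤ (M:ℝ)⁻¹ * ∑ m, ‖x m - xstar‖ ^ 2 := by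
      have h := avg_norm_sq_le (fun m => x m - xstar)
      have e : (M:ℝ)⁻¹ • ∑ m, (x m - xstar) = a := by
        rw [Finset.sum_sub_distrib, smul_sub, ← hxhat, Finset.sum_const, card_univ,
          Fintype.card_fin, ← Nat.cast_smul_eq_nsmul ℝ, smul_smul,
          inv_mul_cancel₀ hM'.ne', one_smul, ha]
      rwa [e] at h
    have hL1 : ∑ m, (f xhat - f xstar + μ / 2 * ‖x m - xstar‖ ^ 2 - L / 2 * ‖x m - xhat‖ ^ 2)
        = (M:ℝ) * (f xhat - f xstar) + μ / 2 * ∑ m, ‖x m - xstar‖ ^ 2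
          - L / 2 * ∑ m, ‖x m - xhat‖ ^ 2 := by
      simp only [Finset.sum_sub_distrib, Finset.sum_add_distrib, Finset.sum_const, card_univ,
        Fintype.card_fin, nsmul_eq_mul, ← Finset.mul_sum]
      ring
    rw [hL1] at hsum
    have final := mul_le_mul_of_nonneg_left hsum (inv_nonneg.mpr hM'.le)
    have e : (M:ℝ)⁻¹ * ((M:ℝ) * (f xhat - f xstar) + μ / 2 * ∑ m, ‖x m - xstar‖ ^ 2
          - L / 2 * ∑ m, ‖x m - xhat‖ ^ 2)
        = (f xhat - f xstar) + μ / 2 * ((M:ℝ)⁻¹ * ∑ m, ‖x m - xstar‖ ^ 2)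
          - L / 2 * ((M:ℝ)⁻¹ * ∑ m, ‖x m - xhat‖ ^ 2) := by
      field_simp
    rw [e] at final
    have hmu2 := mul_le_mul_of_nonneg_left hJ (by positivity : (0:ℝ) ≤ μ / 2)
    rw [hV]
    linarith
  -- probabilistic setup
  have IntP2 : ∀ (m : Fin M) (y : EuclideanSpace ℝ (Fin d)),
      Integrable (fun ω => ‖dF y (z m ω)‖ ^ 2) P :=
    fun m y => comp_map_integrable (hz m) (hlaw m)
      ((hmdF y).norm.pow_const 2).aestronglyMeasurable (hdFsq m y)
  have EP2 : ∀ (m : Fin M) (y : EuclideanSpace ℝ (Fin d)),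
      ∫ ω, ‖dF y (z m ω)‖ ^ 2 ∂P = ∫ w, ‖dF y w‖ ^ 2 ∂(D m) :=
    fun m y => comp_map_integral (hz m) (hlaw m) ((hmdF y).norm.pow_const 2).aestronglyMeasurable
  have IntPInner : ∀ (m : Fin M) (y c : EuclideanSpace ℝ (Fin d)),
      Integrable (fun ω => ⟪c, dF y (z m ω)⟫_ℝ) P :=
    fun m y c => comp_map_integrable (hz m) (hlaw m)
      (Measurable.inner measurable_const (hmdF y)).aestronglyMeasurable (IntInner m y c)
  have EPInner : ∀ (m : Fin M) (y c : EuclideanSpace ℝ (Fin d)),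
      ∫ ω, ⟪c, dF y (z m ω)⟫_ℝ ∂P = ⟪c, df y⟫_ℝ := by
    intro m y c
    rw [comp_map_integral (hz m) (hlaw m)
        (Measurable.inner measurable_const (hmdF y)).aestronglyMeasurable,
      integral_inner (IntdF m y) c, ← hdf m y]
  have IntPmix : ∀ (m n : Fin M) (y1 y2 : EuclideanSpace ℝ (Fin d)),
      Integrable (fun ω => ⟪dF y1 (z m ω), dF y2 (z n ω)⟫_ℝ) P := by
    intro m n y1 y2
    refine Integrable.mono' (((IntP2 m y1).add (IntP2 n y2)).const_mul (1/2))
      (Measurable.inner ((hmdF y1).comp (hz m)) ((hmdF y2).comp (hz n))).aestronglyMeasurable ?_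
    filter_upwards with ω
    simp only [Real.norm_eq_abs, Pi.add_apply]
    have h1 := abs_real_inner_le_norm (dF y1 (z m ω)) (dF y2 (z n ω))
    nlinarith [sq_nonneg (‖dF y1 (z m ω)‖ - ‖dF y2 (z n ω)‖), norm_nonneg (dF y1 (z m ω)),
      norm_nonneg (dF y2 (z n ω))]
  have IntPd2 : ∀ m : Fin M,
      Integrable (fun ω => ‖dF (x m) (z m ω) - dF xstar (z m ω)‖ ^ 2) P := by
    intro m
    refine Integrable.mono' (((IntP2 m (x m)).add (IntP2 m xstar)).const_mul 2)
      ((((hmdF (x m)).comp (hz m)).sub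
        ((hmdF xstar).comp (hz m))).norm.pow_const 2).aestronglyMeasurable ?_
    filter_upwards with ω
    simp only [Real.norm_eq_abs, Pi.add_apply]
    rw [abs_of_nonneg (sq_nonneg _)]
    have h1 := norm_sub_le (dF (x m) (z m ω)) (dF xstar (z m ω))
    nlinarith [norm_nonneg (dF (x m) (z m ω)), norm_nonneg (dF xstar (z m ω)),
      norm_nonneg (dF (x m) (z m ω) - dF xstar (z m ω)),
      sq_nonneg (‖dF (x m) (z m ω)‖ - ‖dF xstar (z m ω)‖)]
  have hgmeas : Measurable (fun ω => (M:ℝ)⁻¹ • ∑ m, dF (x m) (z m ω)) :=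
    (Finset.measurable_sum univ (fun m _ => (hmdF (x m)).comp (hz m))).const_smul ((M:ℝ)⁻¹)
  have hgsmeas : Measurable (fun ω => (M:ℝ)⁻¹ • ∑ m, dF xstar (z m ω)) :=
    (Finset.measurable_sum univ (fun m _ => (hmdF xstar).comp (hz m))).const_smul ((M:ℝ)⁻¹)
  have Ig2 : Integrable (fun ω => ‖(M:ℝ)⁻¹ • ∑ m, dF (x m) (z m ω)‖ ^ 2) P := by
    refine Integrable.mono'
      ((integrable_finset_sum univ (fun m _ => IntP2 m (x m))).const_mul (M:ℝ)⁻¹)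
      (hgmeas.norm.pow_const 2).aestronglyMeasurable ?_
    filter_upwards with ω
    rw [Real.norm_eq_abs, abs_of_nonneg (sq_nonneg _)]
    exact avg_norm_sq_le (fun m => dF (x m) (z m ω))
  have Igs2 : Integrable (fun ω => ‖(M:ℝ)⁻¹ • ∑ m, dF xstar (z m ω)‖ ^ 2) P := by
    refine Integrable.mono'
      ((integrable_finset_sum univ (fun m _ => IntP2 m xstar)).const_mul (M:ℝ)⁻¹)
      (hgsmeas.norm.pow_const 2).aestronglyMeasurable ?_
    filter_upwards with ω
    rw [Real.norm_eq_abs, abs_of_nonneg (sq_nonneg _)]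
    exact avg_norm_sq_le (fun m => dF xstar (z m ω))
  have einner : ∀ ω, ⟪a, (M:ℝ)⁻¹ • ∑ m, dF (x m) (z m ω)⟫_ℝ
      = (M:ℝ)⁻¹ * ∑ m, ⟪a, dF (x m) (z m ω)⟫_ℝ := by
    intro ω
    rw [real_inner_smul_right, inner_sum]
  have IinnerA : Integrable (fun ω => ⟪a, (M:ℝ)⁻¹ • ∑ m, dF (x m) (z m ω)⟫_ℝ) P := by
    refine ((integrable_finset_sum univ (fun m _ => IntPInner m (x m) a)).const_mul
      (M:ℝ)⁻¹).congr ?_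
    filter_upwards with ω using (einner ω).symm
  have hEinner : ∫ ω, ⟪a, (M:ℝ)⁻¹ • ∑ m, dF (x m) (z m ω)⟫_ℝ ∂P
      = (M:ℝ)⁻¹ * ∑ m, ⟪a, df (x m)⟫_ℝ := by
    simp only [einner]
    rw [integral_const_mul, integral_finset_sum univ (fun m _ => IntPInner m (x m) a)]
    congr 1
    exact Finset.sum_congr rfl (fun m _ => EPInner m (x m) a)
  -- Step 1 : expansion of the square
  have step1 : (∫ ω, ‖xhat - γ • ((M : ℝ)⁻¹ • ∑ m, dF (x m) (z m ω)) - xstar‖ ^ 2 ∂P)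
      = ‖a‖ ^ 2 - 2 * γ * ((M:ℝ)⁻¹ * ∑ m, ⟪a, df (x m)⟫_ℝ)
        + γ ^ 2 * ∫ ω, ‖(M:ℝ)⁻¹ • ∑ m, dF (x m) (z m ω)‖ ^ 2 ∂P := by
    have e : ∀ ω, ‖xhat - γ • ((M : ℝ)⁻¹ • ∑ m, dF (x m) (z m ω)) - xstar‖ ^ 2
        = ‖a‖ ^ 2 - 2 * γ * ⟪a, (M:ℝ)⁻¹ • ∑ m, dF (x m) (z m ω)⟫_ℝ
          + γ ^ 2 * ‖(M:ℝ)⁻¹ • ∑ m, dF (x m) (z m ω)‖ ^ 2 := by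
      intro ω
      have h0 : xhat - γ • ((M : ℝ)⁻¹ • ∑ m, dF (x m) (z m ω)) - xstar
          = a - γ • ((M : ℝ)⁻¹ • ∑ m, dF (x m) (z m ω)) := by
        rw [ha]; abel
      rw [h0, norm_sub_sq_real, real_inner_smul_right, norm_smul, Real.norm_eq_abs,
        mul_pow, sq_abs]
      ring
    simp only [e]
    have I2 : Integrable (fun ω => 2 * γ * ⟪a, (M:ℝ)⁻¹ • ∑ m, dF (x m) (z m ω)⟫_ℝ) P :=
      IinnerA.const_mul (2 * γ)
    have I1 : Integrable (fun ω =>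
        ‖a‖ ^ 2 - 2 * γ * ⟪a, (M:ℝ)⁻¹ • ∑ m, dF (x m) (z m ω)⟫_ℝ) P :=
      (integrable_const _).sub I2
    rw [integral_add I1 (Ig2.const_mul (γ ^ 2)),
      integral_sub (integrable_const _) I2,
      integral_const_mul, integral_const_mul, integral_const, probReal_univ,
      smul_eq_mul, one_mul, hEinner]
  -- off-diagonal terms vanish
  have hφ : ∀ i : Fin d, Measurable (fun w => dF xstar w i) :=
    fun i => (measurable_pi_apply i).comp ((WithLp.measurable_ofLp 2 _).comp (hmdF xstar))
  have hoffdiag : ∀ m n : Fin M, m ≠ n →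
      ∫ ω, ⟪dF xstar (z m ω), dF xstar (z n ω)⟫_ℝ ∂P = 0 := by
    intro m n hmn
    have hexp : ∀ ω, ⟪dF xstar (z m ω), dF xstar (z n ω)⟫_ℝ
        = ∑ i, dF xstar (z m ω) i * dF xstar (z n ω) i := by
      intro ω
      rw [PiLp.inner_apply]
      simp [RCLike.inner_apply]
      exact Finset.sum_congr rfl (fun _ _ => mul_comm _ _)
    have hzero : ∀ k : Fin M, ∀ i : Fin d, ∫ ω, dF xstar (z k ω) i ∂P = 0 := by
      intro k i
      have h1 : ∫ ω, dF xstar (z k ω) i ∂P = ∫ w, dF xstar w i ∂(D k) :=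
        comp_map_integral (hz k) (hlaw k) (hφ i).aestronglyMeasurable
      have h2 := (EuclideanSpace.proj (𝕜 := ℝ) i).integral_comp_comm (IntdF k xstar)
      simp only [PiLp.proj_apply] at h2
      rw [h1, h2, ← hdf k xstar, hdf0]
      rfl
    have hprodint : ∀ i : Fin d,
        Integrable (fun ω => dF xstar (z m ω) i * dF xstar (z n ω) i) P := by
      intro i
      refine Integrable.mono' (((IntP2 m xstar).add (IntP2 n xstar)).const_mul (1/2))
        ((((hφ i).comp (hz m))).mul ((hφ i).comp (hz n))).aestronglyMeasurable ?_
      filter_upwards with ω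
      simp only [Real.norm_eq_abs, Pi.add_apply]
      have c1 := coord_sq_le (dF xstar (z m ω)) i
      have c2 := coord_sq_le (dF xstar (z n ω)) i
      rw [abs_mul]
      nlinarith [sq_nonneg (|dF xstar (z m ω) i| - |dF xstar (z n ω) i|),
        sq_abs (dF xstar (z m ω) i), sq_abs (dF xstar (z n ω) i),
        abs_nonneg (dF xstar (z m ω) i), abs_nonneg (dF xstar (z n ω) i)]
    simp only [hexp]
    rw [integral_finset_sum univ (fun i _ => hprodint i)]
    apply Finset.sum_eq_zero
    intro i _
    have hind : IndepFun (fun ω => dF xstar (z m ω) i) (fun ω => dF xstar (z n ω) i) P :=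
      (hindep.indepFun hmn).comp (hφ i) (hφ i)
    have hmul := hind.integral_mul_eq_mul_integral ((hφ i).comp (hz m)).aestronglyMeasurable
      ((hφ i).comp (hz n)).aestronglyMeasurable
    have heq : (fun ω => dF xstar (z m ω) i * dF xstar (z n ω) i)
        = (fun ω => dF xstar (z m ω) i) * (fun ω => dF xstar (z n ω) i) := rfl
    rw [heq]
    rw [hmul, hzero m i, zero_mul]
  -- second moment of the stationary-gradient average
  have hgs2 : ∫ ω, ‖(M:ℝ)⁻¹ • ∑ m, dF xstar (z m ω)‖ ^ 2 ∂P = sopt2 / M := by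
    have e : ∀ ω, ‖(M:ℝ)⁻¹ • ∑ m, dF xstar (z m ω)‖ ^ 2
        = (M:ℝ)⁻¹ ^ 2 * ∑ m, ∑ n, ⟪dF xstar (z m ω), dF xstar (z n ω)⟫_ℝ := by
      intro ω
      rw [norm_smul, Real.norm_eq_abs, abs_of_nonneg (by positivity : (0:ℝ) ≤ (M:ℝ)⁻¹),
        mul_pow, ← real_inner_self_eq_norm_sq, sum_inner]
      simp_rw [inner_sum]
    simp only [e]
    rw [integral_const_mul, integral_finset_sum univ
      (fun m _ => integrable_finset_sum univ (fun n _ => IntPmix m n xstar xstar))]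
    have hrow : ∀ m : Fin M, (∫ ω, ∑ n, ⟪dF xstar (z m ω), dF xstar (z n ω)⟫_ℝ ∂P)
        = ∫ w, ‖dF xstar w‖ ^ 2 ∂(D m) := by
      intro m
      rw [integral_finset_sum univ (fun n _ => IntPmix m n xstar xstar)]
      rw [Finset.sum_eq_single m]
      · have h1 : ∀ ω, ⟪dF xstar (z m ω), dF xstar (z m ω)⟫_ℝ = ‖dF xstar (z m ω)‖ ^ 2 :=
          fun ω => real_inner_self_eq_norm_sq _
        simp only [h1]
        exact EP2 m xstar
      · intro n _ hnm
        exact hoffdiag m n (Ne.symm hnm)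
      · intro hmem
        exact absurd (Finset.mem_univ m) hmem
    rw [Finset.sum_congr rfl (fun m _ => hrow m), hsopt2]
    ring
  -- per-machine gradient deviation
  have hdiffm : ∀ m : Fin M, ∫ ω, ‖dF (x m) (z m ω) - dF xstar (z m ω)‖ ^ 2 ∂P
      ≤ 2 * L * (f (x m) - f xstar) := by
    intro m
    have h1 : ∫ ω, ‖dF (x m) (z m ω) - dF xstar (z m ω)‖ ^ 2 ∂P
        = ∫ w, ‖dF (x m) w - dF xstar w‖ ^ 2 ∂(D m) :=
      comp_map_integral (hz m) (hlaw m)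
        (((hmdF (x m)).sub (hmdF xstar)).norm.pow_const 2).aestronglyMeasurable
    rw [h1]
    have hIrhs : Integrable
        (fun w => 2 * L * (F (x m) w - F xstar w - ⟪dF xstar w, x m - xstar⟫_ℝ)) (D m) := by
      apply Integrable.const_mul
      refine ((hFint m (x m)).sub (hFint m xstar)).sub ?_
      refine (IntInner m xstar (x m - xstar)).congr ?_
      filter_upwards with w using real_inner_comm _ _
    have hle : ∀ᵐ w ∂(D m), ‖dF (x m) w - dF xstar w‖ ^ 2
        ≤ 2 * L * (F (x m) w - F xstar w - ⟪dF xstar w, x m - xstar⟫_ℝ) := by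
      filter_upwards [hsmooth m] with w hw
      exact cocoercive hL hμ hw (x m) xstar
    have h2 := integral_mono_of_nonneg
      (Filter.Eventually.of_forall (fun w => sq_nonneg _)) hIrhs hle
    have h3 : ∫ w, 2 * L * (F (x m) w - F xstar w - ⟪dF xstar w, x m - xstar⟫_ℝ) ∂(D m)
        = 2 * L * (f (x m) - f xstar) := by
      rw [integral_const_mul, hBreg m (x m) xstar, hdf0, inner_zero_left]
      ring
    linarith
  -- bound on the second moment of g
  have hQ : ∫ ω, ‖(M:ℝ)⁻¹ • ∑ m, dF (x m) (z m ω)‖ ^ 2 ∂P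
      ≤ 2 * ((M:ℝ)⁻¹ * ∑ m, ∫ ω, ‖dF (x m) (z m ω) - dF xstar (z m ω)‖ ^ 2 ∂P)
        + 2 * (sopt2 / M) := by
    have hpt : ∀ ω, ‖(M:ℝ)⁻¹ • ∑ m, dF (x m) (z m ω)‖ ^ 2
        ≤ 2 * ((M:ℝ)⁻¹ * ∑ m, ‖dF (x m) (z m ω) - dF xstar (z m ω)‖ ^ 2)
          + 2 * ‖(M:ℝ)⁻¹ • ∑ m, dF xstar (z m ω)‖ ^ 2 := by
      intro ω
      have e0 : (M:ℝ)⁻¹ • ∑ m, dF (x m) (z m ω)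
          = ((M:ℝ)⁻¹ • ∑ m, (dF (x m) (z m ω) - dF xstar (z m ω)))
            + ((M:ℝ)⁻¹ • ∑ m, dF xstar (z m ω)) := by
        rw [← smul_add, ← Finset.sum_add_distrib]
        congr 1
        refine Finset.sum_congr rfl (fun m _ => ?_)
        abel
      have hJ := avg_norm_sq_le (fun m => dF (x m) (z m ω) - dF xstar (z m ω))
      set A := (M:ℝ)⁻¹ • ∑ m, (dF (x m) (z m ω) - dF xstar (z m ω)) with hA
      set B := (M:ℝ)⁻¹ • ∑ m, dF xstar (z m ω) with hB
      have htri : ‖A + B‖ ^ 2 ≤ 2 * ‖A‖ ^ 2 + 2 * ‖B‖ ^ 2 := by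
        have t1 := norm_add_le A B
        have t2 := mul_self_le_mul_self (norm_nonneg (A + B)) t1
        nlinarith [sq_nonneg (‖A‖ - ‖B‖), norm_nonneg A, norm_nonneg B]
      rw [e0]
      calc ‖A + B‖ ^ 2 ≤ 2 * ‖A‖ ^ 2 + 2 * ‖B‖ ^ 2 := htri
        _ ≤ 2 * ((M:ℝ)⁻¹ * ∑ m, ‖dF (x m) (z m ω) - dF xstar (z m ω)‖ ^ 2) + 2 * ‖B‖ ^ 2 := by
            linarith
    have hRint : Integrable (fun ω =>
        2 * ((M:ℝ)⁻¹ * ∑ m, ‖dF (x m) (z m ω) - dF xstar (z m ω)‖ ^ 2)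
          + 2 * ‖(M:ℝ)⁻¹ • ∑ m, dF xstar (z m ω)‖ ^ 2) P :=
      (((integrable_finset_sum univ (fun m _ => IntPd2 m)).const_mul
        (M:ℝ)⁻¹).const_mul 2).add (Igs2.const_mul 2)
    calc ∫ ω, ‖(M:ℝ)⁻¹ • ∑ m, dF (x m) (z m ω)‖ ^ 2 ∂P
        ≤ ∫ ω, (2 * ((M:ℝ)⁻¹ * ∑ m, ‖dF (x m) (z m ω) - dF xstar (z m ω)‖ ^ 2)
            + 2 * ‖(M:ℝ)⁻¹ • ∑ m, dF xstar (z m ω)‖ ^ 2) ∂P :=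
          integral_mono Ig2 hRint hpt
      _ = 2 * ((M:ℝ)⁻¹ * ∑ m, ∫ ω, ‖dF (x m) (z m ω) - dF xstar (z m ω)‖ ^ 2 ∂P)
            + 2 * (sopt2 / M) := by
          rw [integral_add (((integrable_finset_sum univ (fun m _ => IntPd2 m)).const_mul
              (M:ℝ)⁻¹).const_mul 2) (Igs2.const_mul 2),
            integral_const_mul, integral_const_mul, integral_const_mul,
            integral_finset_sum univ (fun m _ => IntPd2 m), hgs2]
  -- step-size bound
  have hγL : 4 * γ * L ≤ 1 := by
    have hden : (0:ℝ) < 4 * L * (1 + 2 / (M:ℝ)) := by positivity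
    have h1 : γ * (4 * L * (1 + 2 / (M:ℝ))) ≤ 1 := (le_div_iff₀ hden).mp hγ
    nlinarith [mul_nonneg (mul_nonneg hγ0.le hL.le)
      (div_nonneg (by norm_num : (0:ℝ) ≤ 2) hM'.le)]
  -- combined second-moment bound
  have hQ2 : ∫ ω, ‖(M:ℝ)⁻¹ • ∑ m, dF (x m) (z m ω)‖ ^ 2 ∂P
      ≤ 4 * L * ((f xhat - f xstar) + L / 2 * Vdev) + 2 * (sopt2 / M) := by
    have hs1 : (M:ℝ)⁻¹ * ∑ m, ∫ ω, ‖dF (x m) (z m ω) - dF xstar (z m ω)‖ ^ 2 ∂P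
        ≤ (M:ℝ)⁻¹ * ∑ m, (2 * L * (f (x m) - f xstar)) :=
      mul_le_mul_of_nonneg_left
        (Finset.sum_le_sum (s := univ) (fun m _ => hdiffm m)) (inv_nonneg.mpr hM'.le)
    have hs2 : (M:ℝ)⁻¹ * ∑ m, (2 * L * (f (x m) - f xstar))
        = 2 * L * ((M:ℝ)⁻¹ * ∑ m, (f (x m) - f xstar)) := by
      rw [← Finset.mul_sum]
      ring
    have hs3 := mul_le_mul_of_nonneg_left gap_avg (by positivity : (0:ℝ) ≤ 2 * L)
    linarith
  -- final assembly
  rw [step1]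
  have b1 := mul_le_mul_of_nonneg_left hinner_lb (by positivity : (0:ℝ) ≤ 2 * γ)
  have b2 := mul_le_mul_of_nonneg_left hQ2 (sq_nonneg γ)
  have h1 : (0:ℝ) ≤ (1 - 4 * γ * L) * (γ * (f xhat - f xstar)) :=
    mul_nonneg (sub_nonneg.mpr hγL) (mul_nonneg hγ0.le hGnn)
  have h2 : (0:ℝ) ≤ (1 - 4 * γ * L) * (γ * L * Vdev) :=
    mul_nonneg (sub_nonneg.mpr hγL) (mul_nonneg (mul_nonneg hγ0.le hL.le) hVnn)
  have h3 : (0:ℝ) ≤ γ * (f xhat - f xstar) := mul_nonneg hγ0.le hGnn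
  have h4 : (0:ℝ) ≤ γ * L * Vdev := mul_nonneg (mul_nonneg hγ0.le hL.le) hVnn
  have step2 : ‖a‖ ^ 2 - 2 * γ * ((M:ℝ)⁻¹ * ∑ m, ⟪a, df (x m)⟫_ℝ)
        + γ ^ 2 * ∫ ω, ‖(M:ℝ)⁻¹ • ∑ m, dF (x m) (z m ω)‖ ^ 2 ∂P
      ≤ ‖a‖ ^ 2 - 2 * γ * ((f xhat - f xstar) + μ / 2 * ‖a‖ ^ 2 - L / 2 * Vdev)
        + γ ^ 2 * (4 * L * ((f xhat - f xstar) + L / 2 * Vdev) + 2 * (sopt2 / M)) := by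
    linarith [b1, b2]
  refine le_trans step2 ?_
  ring_nf
  nlinarith [h1, h2, h3, h4]
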